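/- arXiv:math/0607379 — 3 statements merged into one kernel-verified Lean document; each statement's English description precedes it below -/
import Mathlib

section
/- For every integer N ≥ 3, every real q > 0, and all real θ, θ' such that sinh(η+θ), sinh(η+θ'), sinh(η+θ+θ') are nonzero, the baxterized braid matrix R̂(θ) = I_{N²} + K(θ)·P₀' satisfies the braid (Yang–Baxter) relation R̂₁₂(θ)·R̂₂₃(θ+θ')·R̂₁₂(θ') = R̂₂₃(θ')·R̂₁₂(θ+θ')·R̂₂₃(θ), where R̂₁₂(θ) = R̂(θ)⊗I_N and R̂₂₃(θ) = I_N⊗R̂(θ) are N³×N³ matrices. -/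
open Matrix BigOperators

noncomputable section

/-- The `ρ`-values: `(ρ₁,…,ρ_N) = (n−1/2,…,1/2,0,−1/2,…,−n+1/2)` for `N = 2n+1`
and `(n−1,…,1,0,0,−1,…,−n+1)` for `N = 2n` (here `i : Fin N` is the 0-based index). -/
def rho (N : ℕ) (i : Fin N) : ℝ :=
  let d : ℝ := ((N : ℝ) - 1) / 2 - (i : ℝ)
  if 0 < d then d - 1 / 2 else if d < 0 then d + 1 / 2 else 0

/-- `P₀' = Σ_{i,j} q^{ρ_{j'}−ρ_j} (ij)⊗(i'j')`, where `i' = N−i+1` (0-based: `Fin.rev`). -/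
def P0' (N : ℕ) (q : ℝ) : Matrix (Fin N × Fin N) (Fin N × Fin N) ℂ :=
  Matrix.of fun p s =>
    if p.2 = p.1.rev ∧ s.2 = s.1.rev then ((q ^ (rho N s.1.rev - rho N s.1) : ℝ) : ℂ) else 0

/-- The permutation matrix `P = Σ_{i,j} (ij)⊗(ji)`. -/
def Pmat (N : ℕ) : Matrix (Fin N × Fin N) (Fin N × Fin N) ℂ :=
  Matrix.of fun p s => if s = (p.2, p.1) then 1 else 0

/-- `K(θ) = −sinh θ / sinh(η+θ)`. -/
def Kf (η θ : ℝ) : ℝ := -Real.sinh θ / Real.sinh (η + θ)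

/-- The braid matrix `R̂(θ) = I + K(θ)·P₀'`. -/
def Rhat (N : ℕ) (q η θ : ℝ) : Matrix (Fin N × Fin N) (Fin N × Fin N) ℂ :=
  1 + (Kf η θ : ℂ) • P0' N q

/-- `t^{(1)}(θ) = P·R̂(θ)`; the block `t^{(1)}_{ij}(θ)` has entries `t^{(1)}(θ) (i,a) (j,b)`. -/
def tmat (N : ℕ) (q η θ : ℝ) : Matrix (Fin N × Fin N) (Fin N × Fin N) ℂ :=
  Pmat N * Rhat N q η θ

/-- The monodromy blocks: `mono N q η θ r (i,a) (j,b) = t^{(r)}_{ij}(θ) (a,b)` where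
`t^{(r)}_{ij} = Σ_k t^{(1)}_{ik} ⊗ t^{(r−1)}_{kj}`. -/
def mono (N : ℕ) (q η θ : ℝ) :
    (r : ℕ) → Matrix (Fin N × (Fin r → Fin N)) (Fin N × (Fin r → Fin N)) ℂ
  | 0 => Matrix.of fun p s => if p.1 = s.1 then 1 else 0
  | r + 1 => Matrix.of fun p s =>
      ∑ k : Fin N, tmat N q η θ (p.1, p.2 0) (k, s.2 0) *
        mono N q η θ r (k, Fin.tail p.2) (s.1, Fin.tail s.2)

/-- The order-`r` transfer matrix `T^{(r)}(θ) = Σ_i t^{(r)}_{ii}(θ)` acting on `(ℂ^N)^{⊗r}`. -/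
def Transfer (N : ℕ) (q η θ : ℝ) (r : ℕ) : Matrix (Fin r → Fin N) (Fin r → Fin N) ℂ :=
  Matrix.of fun a b => ∑ i : Fin N, mono N q η θ r (i, a) (i, b)

/-- The order-2 transfer matrix `T^{(2)}(θ) = Σ_{i,k} t^{(1)}_{ik}(θ) ⊗ t^{(1)}_{ki}(θ)`
acting on `ℂ^N ⊗ ℂ^N` with basis `|ab⟩`. -/
def Transfer2 (N : ℕ) (q η θ : ℝ) : Matrix (Fin N × Fin N) (Fin N × Fin N) ℂ :=
  Matrix.of fun p s =>
    ∑ i : Fin N, ∑ k : Fin N, tmat N q η θ (i, p.1) (k, s.1) * tmat N q η θ (k, p.2) (i, s.2)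

/-- The quantum integer `[m]_q`. -/
def qint (q : ℝ) (m : ℕ) : ℝ :=
  if q = 1 then (m : ℝ) else (q ^ m - q⁻¹ ^ m) / (q - q⁻¹)

/-- Standard basis vector. -/
def bv {ι : Type*} [DecidableEq ι] (a : ι) : ι → ℂ := fun c => if c = a then 1 else 0

open Kronecker

/-- `R̂₁₂(θ) = R̂(θ) ⊗ I_N`, as an `N³×N³` matrix. -/
def R12 (N : ℕ) (q η θ : ℝ) : Matrix (Fin N × Fin N × Fin N) (Fin N × Fin N × Fin N) ℂ :=
  Matrix.reindex (Equiv.prodAssoc (Fin N) (Fin N) (Fin N))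
    (Equiv.prodAssoc (Fin N) (Fin N) (Fin N))
    (Rhat N q η θ ⊗ₖ (1 : Matrix (Fin N) (Fin N) ℂ))

/-- `R̂₂₃(θ) = I_N ⊗ R̂(θ)`, as an `N³×N³` matrix. -/
def R23 (N : ℕ) (q η θ : ℝ) : Matrix (Fin N × Fin N × Fin N) (Fin N × Fin N × Fin N) ℂ :=
  (1 : Matrix (Fin N) (Fin N) ℂ) ⊗ₖ Rhat N q η θ


/-! ### Auxiliary lemmas -/

lemma rho_diff (N : ℕ) (x : Fin N) :
    rho N x.rev - rho N x =
      if 2 * (x : ℕ) + 1 < N then (2 * (x : ℕ) : ℝ) - N + 2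
      else if N < 2 * (x : ℕ) + 1 then (2 * (x : ℕ) : ℝ) - N
      else 0 := by
  have hx : (x : ℕ) < N := x.2
  have hrev : ((x.rev : ℕ) : ℝ) = (N : ℝ) - 1 - (x : ℕ) := by
    rw [Fin.val_rev]; push_cast [Nat.cast_sub (by omega : x.val + 1 ≤ N)]; ring
  rcases lt_trichotomy (2 * (x : ℕ) + 1) N with h | h | h
  · have hr : 2 * ((x : ℕ) : ℝ) + 1 < (N : ℝ) := by exact_mod_cast h
    rw [if_pos h]
    unfold rho
    simp only [hrev]
    split_ifs <;> linarith
  · have hr : 2 * ((x : ℕ) : ℝ) + 1 = (N : ℝ) := by exact_mod_cast h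
    rw [if_neg (by omega), if_neg (by omega)]
    unfold rho
    simp only [hrev]
    split_ifs <;> linarith
  · have hr : (N : ℝ) < 2 * ((x : ℕ) : ℝ) + 1 := by exact_mod_cast h
    rw [if_neg (by omega), if_pos h]
    unfold rho
    simp only [hrev]
    split_ifs <;> linarith

lemma geom_part (N : ℕ) (hN : 3 ≤ N) (q : ℝ) (hq : 0 < q) :
    ∑ k ∈ Finset.range (N-1), q ^ ((2 * (k:ℕ) : ℝ) - N + 2) = qint q (N-1) := by
  have hq0 : q ≠ 0 := ne_of_gt hq
  by_cases hq1 : q = 1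
  · simp [hq1, qint, Real.one_rpow]
  · have h2 : q ^ 2 ≠ 1 := by
      intro h
      have h' : (q - 1) * (q + 1) = 0 := by nlinarith [h]
      rcases mul_eq_zero.mp h' with h'' | h''
      · exact hq1 (by linarith)
      · nlinarith
    have hterm : ∀ k : ℕ, q ^ ((2 * (k:ℕ) : ℝ) - N + 2) = (q ^ 2) ^ k * (q ^ 2 / q ^ N) := by
      intro k
      rw [show ((2 * (k:ℕ) : ℝ) - N + 2) = ((2*k : ℕ) : ℝ) + ((2:ℝ) - N) by push_cast; ring,
        Real.rpow_add hq, Real.rpow_natCast, Real.rpow_sub hq, pow_mul,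
        show ((2:ℝ)) = ((2:ℕ):ℝ) by norm_num, Real.rpow_natCast, Real.rpow_natCast]
    simp only [hterm, ← Finset.sum_mul, geom_sum_eq h2]
    unfold qint
    rw [if_neg hq1]
    set M := N - 1 with hM
    have hQ0 : q ^ M ≠ 0 := pow_ne_zero _ hq0
    have hsub : q - q⁻¹ ≠ 0 := by
      intro h
      have h' : q = q⁻¹ := by linarith [sub_eq_zero.mp h]
      have : q ^ 2 = 1 := by field_simp at h'; nlinarith [h']
      exact h2 this
    have hNe : q ^ N = q * q ^ M := by rw [show N = M + 1 by omega, pow_succ]; ring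
    rw [hNe, show (q^2)^M = q^M * q^M by rw [← mul_pow]; ring_nf, inv_pow]
    have h21 : q ^ 2 - 1 ≠ 0 := sub_ne_zero.mpr h2
    rw [div_mul_div_comm, div_eq_div_iff (mul_ne_zero h21 (mul_ne_zero hq0 hQ0)) hsub]
    field_simp

def G (N : ℕ) (q : ℝ) (x : ℕ) : ℝ :=
  q ^ (if 2 * x + 1 < N then (2 * x : ℝ) - N + 2 else if N < 2 * x + 1 then (2 * x : ℝ) - N else 0)

lemma Ssum (N : ℕ) (hN : 3 ≤ N) (q : ℝ) (hq : 0 < q) :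
    ∑ x : Fin N, q ^ (rho N x.rev - rho N x) = qint q (N-1) + 1 := by
  have step1 : ∑ x : Fin N, q ^ (rho N x.rev - rho N x) = ∑ x ∈ Finset.range N, G N q x := by
    rw [← Fin.sum_univ_eq_sum_range (fun x => G N q x) N]
    refine Finset.sum_congr rfl fun x _ => ?_
    rw [rho_diff]; rfl
  rw [step1]
  have hx0 : N / 2 ∈ Finset.range N := by simp; omega
  rw [← Finset.add_sum_erase _ _ hx0]
  have hFx0 : G N q (N / 2) = 1 := by
    unfold G
    rcases Nat.even_or_odd N with ⟨n, hn⟩ | ⟨n, hn⟩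
    · rw [if_neg (by omega), if_pos (by omega)]
      have h1 : N / 2 = n := by omega
      rw [show 2 * ((N/2 : ℕ):ℝ) - (N:ℝ) = 0 by rw [h1, hn]; push_cast; ring]
      exact Real.rpow_zero q
    · rw [if_neg (by omega), if_neg (by omega)]
      exact Real.rpow_zero q
  rw [hFx0]
  have hbij : ∑ x ∈ (Finset.range N).erase (N/2), G N q x
      = ∑ k ∈ Finset.range (N-1), q ^ ((2 * (k:ℕ) : ℝ) - N + 2) := by
    apply Finset.sum_nbij' (i := fun x => if x < N / 2 then x else x - 1)
      (j := fun k => if k < N / 2 then k else k + 1)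
    · intro a ha
      simp only [Finset.mem_erase, Finset.mem_range] at ha
      simp only [Finset.mem_range]
      split_ifs <;> omega
    · intro a ha
      simp only [Finset.mem_range] at ha
      simp only [Finset.mem_erase, Finset.mem_range]
      split_ifs <;> omega
    · intro a ha
      simp only [Finset.mem_erase, Finset.mem_range] at ha
      split_ifs <;> omega
    · intro a ha
      simp only [Finset.mem_range] at ha
      split_ifs <;> omega
    · intro x hx
      simp only [Finset.mem_erase, Finset.mem_range] at hx
      by_cases h : x < N / 2
      · rw [if_pos h]
        unfold G
        rw [if_pos (by omega)]
      · rw [if_neg h]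
        unfold G
        rw [if_neg (by omega), if_pos (by omega)]
        have hx1 : 1 ≤ x := by omega
        congr 1
        push_cast [Nat.cast_sub hx1]
        ring
  rw [hbij, geom_part N hN q hq]
  ring

set_option maxHeartbeats 1000000 in
lemma scalar_id (η θ θ' : ℝ)
    (h1 : Real.sinh (η + θ) ≠ 0) (h2 : Real.sinh (η + θ') ≠ 0)
    (h3 : Real.sinh (η + (θ + θ')) ≠ 0) :
    Kf η θ + Kf η θ' + Kf η θ * Kf η θ' * (Real.exp η + Real.exp (-η))
      + Kf η θ * Kf η (θ + θ') * Kf η θ' = Kf η (θ + θ') := by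
  have key : Real.sinh θ * Real.sinh (η+θ') * Real.sinh (η+(θ+θ'))
      + Real.sinh θ' * Real.sinh (η+θ) * Real.sinh (η+(θ+θ'))
      - (Real.exp η + Real.exp (-η)) * Real.sinh θ * Real.sinh θ' * Real.sinh (η+(θ+θ'))
      + Real.sinh θ * Real.sinh (θ+θ') * Real.sinh θ'
      = Real.sinh (θ+θ') * Real.sinh (η+θ) * Real.sinh (η+θ') := by
    simp only [Real.sinh_eq, Real.exp_add, Real.exp_neg, Real.exp_add]
    have e1 := Real.exp_ne_zero η
    have e2 := Real.exp_ne_zero θ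
    have e3 := Real.exp_ne_zero θ'
    field_simp
    ring
  unfold Kf
  generalize Real.sinh (η + (θ + θ')) = C at h3 key ⊢
  generalize Real.sinh (η + θ) = A at h1 key ⊢
  generalize Real.sinh (η + θ') = B at h2 key ⊢
  field_simp
  linear_combination (-1 : ℝ) * key

/-- The coefficient `q^(ρ_{d'} − ρ_d)` as a complex number. -/
def cc (N : ℕ) (q : ℝ) (d : Fin N) : ℂ := ((q ^ (rho N d.rev - rho N d) : ℝ) : ℂ)

def Amat (N : ℕ) (q : ℝ) : Matrix (Fin N × Fin N × Fin N) (Fin N × Fin N × Fin N) ℂ :=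
  Matrix.of fun p s =>
    if p.2.1 = p.1.rev ∧ s.2.1 = s.1.rev ∧ p.2.2 = s.2.2 then cc N q s.1 else 0

def Bmat (N : ℕ) (q : ℝ) : Matrix (Fin N × Fin N × Fin N) (Fin N × Fin N × Fin N) ℂ :=
  Matrix.of fun p s =>
    if p.1 = s.1 ∧ p.2.2 = p.2.1.rev ∧ s.2.2 = s.2.1.rev then cc N q s.2.1 else 0

lemma cc_mul_rev (N : ℕ) (q : ℝ) (hq : 0 < q) (d : Fin N) : cc N q d * cc N q d.rev = 1 := by
  unfold cc
  rw [← Complex.ofReal_mul, ← Real.rpow_add hq, Fin.rev_rev]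
  norm_num

lemma R12_eq (N : ℕ) (q η θ : ℝ) : R12 N q η θ = 1 + (Kf η θ : ℂ) • Amat N q := by
  ext ⟨a, b, c⟩ ⟨d, e, f⟩
  simp only [R12, Rhat, Amat, reindex_apply, submatrix_apply, Equiv.prodAssoc_symm_apply,
    kroneckerMap_apply, Matrix.add_apply, Matrix.smul_apply, Matrix.one_apply, P0',
    Matrix.of_apply, cc, Prod.mk.injEq, Prod.ext_iff, smul_eq_mul]
  split_ifs <;> simp_all

lemma R23_eq (N : ℕ) (q η θ : ℝ) : R23 N q η θ = 1 + (Kf η θ : ℂ) • Bmat N q := by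
  ext ⟨a, b, c⟩ ⟨d, e, f⟩
  simp only [R23, Rhat, Bmat, kroneckerMap_apply, Matrix.add_apply, Matrix.smul_apply,
    Matrix.one_apply, P0', Matrix.of_apply, cc, Prod.mk.injEq, Prod.ext_iff, smul_eq_mul]
  split_ifs <;> simp_all

lemma sum_if_const {C : Prop} [Decidable C] {β : Type*} [Fintype β] (h : β → ℂ) :
    (∑ y : β, if C then h y else 0) = if C then ∑ y : β, h y else 0 := by
  split_ifs <;> simp

lemma AA (N : ℕ) (q : ℝ) :
    Amat N q * Amat N q = ((∑ x : Fin N, cc N q x)) • Amat N q := by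
  ext ⟨a, b, c⟩ ⟨d, e, f⟩
  simp only [Matrix.mul_apply, Amat, Matrix.of_apply, Matrix.smul_apply, smul_eq_mul,
    Fintype.sum_prod_type, ite_mul, mul_ite, zero_mul, mul_zero]
  simp only [ite_and, sum_if_const, Finset.sum_ite_eq, Finset.sum_ite_eq',
    Finset.mem_univ, if_true]
  by_cases h1 : b = a.rev <;> by_cases h2 : e = d.rev <;> by_cases h3 : c = f <;>
    simp [h1, h2, h3, Finset.sum_mul, eq_comm, Finset.mul_sum]

lemma BB (N : ℕ) (q : ℝ) :
    Bmat N q * Bmat N q = ((∑ x : Fin N, cc N q x)) • Bmat N q := by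
  ext ⟨a, b, c⟩ ⟨d, e, f⟩
  simp only [Matrix.mul_apply, Bmat, Matrix.of_apply, Matrix.smul_apply, smul_eq_mul,
    Fintype.sum_prod_type, ite_mul, mul_ite, zero_mul, mul_zero]
  simp only [ite_and, sum_if_const, Finset.sum_ite_eq, Finset.sum_ite_eq',
    Finset.mem_univ, if_true]
  by_cases h1 : a = d <;> by_cases h2 : c = b.rev <;> by_cases h3 : f = e.rev <;>
    simp [h1, h2, h3, Finset.sum_mul, eq_comm, Finset.mul_sum]

lemma ABA (N : ℕ) (q : ℝ) (hq : 0 < q) :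
    Amat N q * Bmat N q * Amat N q = Amat N q := by
  ext ⟨a, b, c⟩ ⟨d, e, f⟩
  simp only [Matrix.mul_apply, Amat, Bmat, Matrix.of_apply,
    Fintype.sum_prod_type, ite_mul, mul_ite, zero_mul, mul_zero, Finset.sum_mul, Finset.mul_sum]
  simp only [ite_and, sum_if_const, Finset.sum_ite_eq, Finset.sum_ite_eq',
    Finset.mem_univ, if_true]
  by_cases h1 : b = a.rev <;> by_cases h2 : e = d.rev <;> by_cases h3 : c = f <;>
    simp [h1, h2, h3, eq_comm, Fin.rev_rev, cc_mul_rev N q hq, mul_comm, mul_assoc, mul_left_comm]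

lemma BAB (N : ℕ) (q : ℝ) (hq : 0 < q) :
    Bmat N q * Amat N q * Bmat N q = Bmat N q := by
  ext ⟨a, b, c⟩ ⟨d, e, f⟩
  simp only [Matrix.mul_apply, Amat, Bmat, Matrix.of_apply,
    Fintype.sum_prod_type, ite_mul, mul_ite, zero_mul, mul_zero, Finset.sum_mul, Finset.mul_sum]
  simp only [ite_and, sum_if_const, Finset.sum_ite_eq, Finset.sum_ite_eq',
    Finset.mem_univ, if_true]
  by_cases h1 : a = d <;> by_cases h2 : c = b.rev <;> by_cases h3 : f = e.rev <;>
    simp [h1, h2, h3, eq_comm, Fin.rev_rev, cc_mul_rev N q hq, mul_comm, mul_assoc, mul_left_comm]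

lemma core {R : Type*} [Ring R] [Algebra ℂ R] (A B : R) (S a b c : ℂ)
    (hAA : A * A = S • A) (hBB : B * B = S • B)
    (hABA : A * (B * A) = A) (hBAB : B * (A * B) = B)
    (hs : a + c + a * c * S + a * b * c = b) :
    (1 + a • A) * ((1 + b • B) * (1 + c • A)) =
      (1 + c • B) * ((1 + b • A) * (1 + a • B)) := by
  simp only [mul_add, add_mul, one_mul, mul_one, smul_mul_assoc, mul_smul_comm, smul_smul,
    hAA, hBB, hABA, hBAB]
  simp only [smul_add, smul_smul]
  match_scalars <;> first | ring1 | linear_combination hs | linear_combination -hs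

/-- The baxterized braid matrix `R̂(θ) = I + K(θ)·P₀'` satisfies the braid (Yang–Baxter)
relation `R̂₁₂(θ)·R̂₂₃(θ+θ')·R̂₁₂(θ') = R̂₂₃(θ')·R̂₁₂(θ+θ')·R̂₂₃(θ)`. -/
theorem braid_relation (N : ℕ) (hN : 3 ≤ N) (q : ℝ) (hq : 0 < q)
    (η : ℝ) (hηpos : 0 < η)
    (hη : Real.exp η + Real.exp (-η) = qint q (N - 1) + 1)
    (θ θ' : ℝ)
    (h1 : Real.sinh (η + θ) ≠ 0) (h2 : Real.sinh (η + θ') ≠ 0)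
    (h3 : Real.sinh (η + (θ + θ')) ≠ 0) :
    R12 N q η θ * R23 N q η (θ + θ') * R12 N q η θ' =
      R23 N q η θ' * R12 N q η (θ + θ') * R23 N q η θ := by
  have hq0 : q ≠ 0 := ne_of_gt hq
  have hS : (∑ x : Fin N, cc N q x) = ((Real.exp η + Real.exp (-η) : ℝ) : ℂ) := by
    unfold cc
    rw [← Complex.ofReal_sum]
    rw [Ssum N hN q hq, ← hη]
  have hsR := scalar_id η θ θ' h1 h2 h3
  have hs : (Kf η θ : ℂ) + (Kf η θ' : ℂ)
      + (Kf η θ : ℂ) * (Kf η θ' : ℂ) * ((Real.exp η + Real.exp (-η) : ℝ) : ℂ)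
      + (Kf η θ : ℂ) * (Kf η (θ + θ') : ℂ) * (Kf η θ' : ℂ) = (Kf η (θ + θ') : ℂ) := by
    exact_mod_cast congrArg (Complex.ofReal) hsR
  rw [R12_eq, R12_eq, R12_eq, R23_eq, R23_eq, R23_eq, mul_assoc, mul_assoc]
  exact core (Amat N q) (Bmat N q) _ _ _ _
    (by rw [AA, hS]) (by rw [BB, hS])
    (by rw [← mul_assoc, ABA N q hq]) (by rw [← mul_assoc, BAB N q hq]) hs

end
end

section
/- For N = 3 and every r ≥ 1, let J be the linear operator on (ℂ³)^{⊗r} defined by J|a₁a₂…a_r⟩ = |(4−a₁)(4−a₂)…(4−a_r)⟩, and write T^{(r)}_q(θ) for the order-r transfer matrix built with parameter q. Then J·T^{(r)}_q(θ)·J = T^{(r)}_{q^{−1}}(θ), where K(θ) (and η) are unchanged because e^η + e^{−η} = q + q^{−1} + 1 is invariant under q ↦ q^{−1}. In particular the invariant subspaces are paired as S_{r+k} ↔ S_{3r−k} for 0 ≤ k ≤ r, with corresponding eigenvalues related by q ↦ q^{−1}. -/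
open Matrix BigOperators

noncomputable section

/-- The label-reversal operator `J|a₁…a_r⟩ = |(4−a₁)…(4−a_r)⟩` (0-based: `Fin.rev`). -/
def Jmat (r : ℕ) : Matrix (Fin r → Fin 3) (Fin r → Fin 3) ℂ :=
  Matrix.of fun b a => if b = (fun i => (a i).rev) then 1 else 0

lemma rho_rev3 (j : Fin 3) : rho 3 j.rev = - rho 3 j := by
  fin_cases j <;> simp [rho, Fin.rev] <;> norm_num

lemma P0'_rev (q : ℝ) (hq : 0 < q) (p s : Fin 3 × Fin 3) :
    P0' 3 q (p.1.rev, p.2.rev) (s.1.rev, s.2.rev) = P0' 3 q⁻¹ p s := by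
  simp only [P0', Matrix.of_apply, Fin.rev_rev]
  have hc1 : p.2.rev = p.1 ↔ p.2 = p.1.rev :=
    ⟨fun h => by rw [← h, Fin.rev_rev], fun h => by rw [h, Fin.rev_rev]⟩
  have hc2 : s.2.rev = s.1 ↔ s.2 = s.1.rev :=
    ⟨fun h => by rw [← h, Fin.rev_rev], fun h => by rw [h, Fin.rev_rev]⟩
  simp only [hc1, hc2]
  congr 1
  rw [rho_rev3]
  norm_cast
  rw [show rho 3 s.1 - -rho 3 s.1 = -(-rho 3 s.1 - rho 3 s.1) by ring,
    Real.rpow_neg hq.le, ← Real.inv_rpow hq.le]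

lemma tmat_apply (N : ℕ) (q η θ : ℝ) (p s : Fin N × Fin N) :
    tmat N q η θ p s = Rhat N q η θ (p.2, p.1) s := by
  simp [tmat, Matrix.mul_apply, Pmat, ite_mul, Finset.sum_ite_eq]

lemma tmat_rev (q : ℝ) (hq : 0 < q) (η θ : ℝ) (i a j b : Fin 3) :
    tmat 3 q η θ (i.rev, a.rev) (j.rev, b.rev) = tmat 3 q⁻¹ η θ (i, a) (j, b) := by
  rw [tmat_apply, tmat_apply]
  simp only [Rhat, Matrix.add_apply, Matrix.smul_apply, Matrix.one_apply]
  have h1 : ((a.rev, i.rev) : Fin 3 × Fin 3) = (j.rev, b.rev) ↔ ((a, i) : Fin 3 × Fin 3) = (j, b) := by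
    simp [Prod.ext_iff, Fin.rev_inj]
  simp only [h1, P0'_rev q hq (a, i) (j, b)]

lemma mono_rev (q : ℝ) (hq : 0 < q) (η θ : ℝ) (r : ℕ) (i j : Fin 3)
    (a b : Fin r → Fin 3) :
    mono 3 q η θ r (i.rev, fun t => (a t).rev) (j.rev, fun t => (b t).rev) =
      mono 3 q⁻¹ η θ r (i, a) (j, b) := by
  induction r generalizing i j with
  | zero => simp [mono, Fin.rev_inj]
  | succ n ih =>
      simp only [mono, Matrix.of_apply]
      refine Fintype.sum_equiv (Fin.revPerm) _ _ fun k => ?_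
      have h1 : Fin.tail (fun t => (a t).rev) = fun t => ((Fin.tail a) t).rev := rfl
      have h2 : Fin.tail (fun t => (b t).rev) = fun t => ((Fin.tail b) t).rev := rfl
      rw [h1, h2]
      simp only [Fin.revPerm_apply]
      have ht := tmat_rev q hq η θ i (a 0) k.rev (b 0)
      rw [Fin.rev_rev] at ht
      have hm := ih k.rev j (Fin.tail a) (Fin.tail b)
      rw [Fin.rev_rev] at hm
      rw [ht, hm]

lemma rev_eq_iff {r : ℕ} (b c : Fin r → Fin 3) :
    (b = fun i => (c i).rev) ↔ (c = fun i => (b i).rev) := by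
  constructor <;> rintro rfl <;> funext i <;> simp [Fin.rev_rev]

/-- For `N = 3` and every `r ≥ 1`, `J·T^{(r)}_q(θ)·J = T^{(r)}_{q⁻¹}(θ)`; moreover `J` maps
the invariant subspace `S_n` to `S_{4r−n}`, pairing `S_{r+k} ↔ S_{3r−k}` with eigenvalues
related by `q ↦ q⁻¹`. -/
theorem transfer_q_inversion (q : ℝ) (hq : 0 < q) (η : ℝ) (hηpos : 0 < η)
    (hη : Real.exp η + Real.exp (-η) = q + q⁻¹ + 1)
    (θ : ℝ) (hθ : Real.sinh (η + θ) ≠ 0) (r : ℕ) (hr : 1 ≤ r) :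
    Jmat r * Transfer 3 q η θ r * Jmat r = Transfer 3 q⁻¹ η θ r ∧
    ∀ a : Fin r → Fin 3,
      (∑ i, (((a i).rev : ℕ) + 1)) = 4 * r - ∑ i, ((a i : ℕ) + 1) := by
  constructor
  · ext b a
    have hJT : ∀ x d, (Jmat r * Transfer 3 q η θ r) x d
        = Transfer 3 q η θ r (fun i => (x i).rev) d := by
      intro x d
      rw [Matrix.mul_apply]
      simp only [Jmat, Matrix.of_apply]
      have hite : ∀ c : Fin r → Fin 3,
          (if x = (fun i => (c i).rev) then (1:ℂ) else 0)
            = (if c = (fun i => (x i).rev) then (1:ℂ) else 0) :=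
        fun c => if_congr (rev_eq_iff x c) rfl rfl
      simp only [hite, ite_mul, one_mul, zero_mul, Finset.sum_ite_eq', Finset.mem_univ,
        if_true]
    rw [Matrix.mul_apply]
    simp only [hJT]
    have : ∀ d, Jmat r d a = if d = (fun i => (a i).rev) then 1 else 0 := fun d => rfl
    simp only [this, mul_ite, mul_one, mul_zero, Finset.sum_ite_eq', Finset.mem_univ, if_true]
    show Transfer 3 q η θ r (fun i => (b i).rev) (fun i => (a i).rev)
        = Transfer 3 q⁻¹ η θ r b a
    simp only [Transfer, Matrix.of_apply]
    refine Fintype.sum_equiv (Fin.revPerm) _ _ fun k => ?_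
    simp only [Fin.revPerm_apply]
    have hm := mono_rev q hq η θ r k.rev k.rev b a
    rw [Fin.rev_rev] at hm
    exact hm
  · intro a
    have key : (∑ i, (((a i).rev : ℕ) + 1)) + (∑ i, ((a i : ℕ) + 1)) = 4 * r := by
      rw [← Finset.sum_add_distrib]
      have : ∀ i : Fin r, (((a i).rev : ℕ) + 1) + ((a i : ℕ) + 1) = 4 := by
        intro i
        have := (a i).isLt
        simp only [Fin.val_rev]
        omega
      rw [Finset.sum_congr rfl fun i _ => this i]
      simp [mul_comm]
    omega

end
end

section
/- For N = 3 and r = 4, write K = K(θ), and for each fourth root of unity ω ∈ {1, i, −1, −i} define F_ω = |1232⟩ + ω|2123⟩ + ω²|3212⟩ + ω³|2321⟩ in the invariant subspace S₈. Then F_ω is directly an eigenvector of the transfer matrix: T^{(4)}(θ)F_ω = (ω³K⁴ + ω)·F_ω. -/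
open Matrix BigOperators

noncomputable section

/-- `F_ω = |1232⟩ + ω|2123⟩ + ω²|3212⟩ + ω³|2321⟩`. -/
def Fvec (ω : ℂ) : (Fin 4 → Fin 3) → ℂ :=
  bv (![0, 1, 2, 1] : Fin 4 → Fin 3) + ω • bv (![1, 0, 1, 2] : Fin 4 → Fin 3) +
    ω ^ 2 • bv (![2, 1, 0, 1] : Fin 4 → Fin 3) + ω ^ 3 • bv (![1, 2, 1, 0] : Fin 4 → Fin 3)

lemma tval_aux (q η θ : ℝ) (i a j b : Fin 3) :
    tmat 3 q η θ (i, a) (j, b) =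
      (if a = j ∧ i = b then 1 else 0) +
        (Kf η θ : ℂ) * (if i = a.rev ∧ b = j.rev then
          (![((q⁻¹ : ℝ) : ℂ), 1, ((q : ℝ) : ℂ)] j) else 0) := by
  have h : tmat 3 q η θ (i, a) (j, b) = Rhat 3 q η θ (a, i) (j, b) := by
    simp [tmat, Matrix.mul_apply, Pmat]
  rw [h]
  have hm1 : (q ^ ((-1 : ℝ)) : ℝ) = q⁻¹ := by
    rw [show (-1 : ℝ) = ((-1 : ℤ) : ℝ) by norm_num, Real.rpow_intCast]; simp
  fin_cases j <;>
    norm_num [Rhat, P0', Matrix.one_apply, Prod.ext_iff, rho, Fin.rev,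
      hm1, and_comm, mul_comm]

lemma T4_aux (q η θ : ℝ) (x y : Fin 4 → Fin 3) : Transfer 3 q η θ 4 x y =
    ∑ i : Fin 3, ∑ k1 : Fin 3, ∑ k2 : Fin 3, ∑ k3 : Fin 3,
      tmat 3 q η θ (i, x 0) (k1, y 0) * (tmat 3 q η θ (k1, x 1) (k2, y 1) *
        (tmat 3 q η θ (k2, x 2) (k3, y 2) * tmat 3 q η θ (k3, x 3) (i, y 3))) := by
  simp [Transfer, mono, Fin.tail, Finset.mul_sum, mul_assoc]

set_option maxHeartbeats 2000000 in
/-- For `N = 3`, `r = 4` and each fourth root of unity `ω`, the state `F_ω ∈ S₈` is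
directly an eigenvector of `T^{(4)}(θ)` with eigenvalue `ω³K⁴ + ω`. -/
theorem transfer4_S8_F_eigenstate (q : ℝ) (hq : 0 < q) (η : ℝ) (hηpos : 0 < η)
    (hη : Real.exp η + Real.exp (-η) = q + q⁻¹ + 1)
    (θ : ℝ) (hθ : Real.sinh (η + θ) ≠ 0) (ω : ℂ) (hω : ω ^ 4 = 1) :
    (Transfer 3 q η θ 4).mulVec (Fvec ω) =
      (ω ^ 3 * (Kf η θ : ℂ) ^ 4 + ω) • Fvec ω := by
  have hq0 : ((q : ℝ) : ℂ) ≠ 0 := by exact_mod_cast hq.ne'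
  have hv := tval_aux q η θ
  have h5 : ω ^ 5 = ω := by rw [pow_succ, hω, one_mul]
  have h6 : ω ^ 6 = ω ^ 2 := by rw [pow_succ, h5]; ring
  have key : (Transfer 3 q η θ 4).mulVec (Fvec ω) = fun x =>
      Transfer 3 q η θ 4 x ![0, 1, 2, 1] + ω * Transfer 3 q η θ 4 x ![1, 0, 1, 2] +
        ω ^ 2 * Transfer 3 q η θ 4 x ![2, 1, 0, 1] +
        ω ^ 3 * Transfer 3 q η θ 4 x ![1, 2, 1, 0] := by
    have hone : ∀ a : Fin 4 → Fin 3, (Transfer 3 q η θ 4).mulVec (bv a) = fun x =>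
        Transfer 3 q η θ 4 x a := by
      intro a; funext x
      simp [Matrix.mulVec, dotProduct, bv, mul_ite]
    show (Transfer 3 q η θ 4).mulVec (_ + _ + _ + _) = _
    funext x
    simp only [Matrix.mulVec_add, Matrix.mulVec_smul, hone, Pi.add_apply, Pi.smul_apply,
      smul_eq_mul]
  rw [key]
  funext x
  obtain ⟨x0, x1, x2, x3, rfl⟩ : ∃ a b c d, x = ![a, b, c, d] :=
    ⟨x 0, x 1, x 2, x 3, by funext i; fin_cases i <;> rfl⟩
  simp only [Pi.smul_apply, smul_eq_mul, Fvec, Pi.add_apply, bv]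
  fin_cases x0 <;> fin_cases x1 <;> fin_cases x2 <;> fin_cases x3 <;>
    (simp (config := { decide := true }) only [T4_aux, hv, Fin.sum_univ_three,
        Matrix.cons_val_zero, Matrix.cons_val_one, Matrix.head_cons,
        Matrix.cons_val_two, Matrix.tail_cons, Matrix.cons_val_three,
        if_true, if_false, mul_zero, zero_mul, add_zero, zero_add, mul_one, one_mul, Complex.ofReal_inv]
     <;> (try field_simp) <;> (try ring_nf) <;> (try simp only [h5, h6, hω]) <;>
       (try ring_nf) <;> (try ring))

end
end
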